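/- Let 0 < q < 1 and r ≥ 1 an integer. For every positive integer N, the q-multiple gamma function at integer argument satisfies G_r(N+1;q) = (1-q)^{-C(N,r)} ∏_{n=1}^{N} (1-q^n)^{C(N-n, r-1)}, where G_r(z+1;q) := (1-q)^{-C(z,r)} ∏_{n=1}^{∞} ( (1-q^{z+n})/(1-q^n) )^{(-1)^r C(n+r-2, r-1)} (1-q^n)^{g_r(z,n)}. -/

import Mathlib

open Finset Filter Topology

/-- Generalized binomial coefficient C(z,k) = z(z-1)⋯(z-k+1)/k!. -/
noncomputable def genBinom (z : ℂ) (k : ℕ) : ℂ :=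
  (∏ i ∈ Finset.range k, (z - i)) / (Nat.factorial k)

/-- g_r(z,n) = ∑_{m=1}^{r-1} (-1)^{m-1} C(z, r-m) C(n+m-2, m-1), with g_1 = 0. -/
noncomputable def qg (r : ℕ) (z : ℂ) (n : ℕ) : ℂ :=
  ∑ m ∈ Finset.Icc 1 (r - 1),
    (-1 : ℂ) ^ (m - 1) * genBinom z (r - m) * (Nat.choose (n + m - 2) (m - 1))

lemma genBinom_zero (z : ℂ) : genBinom z 0 = 1 := by simp [genBinom]

lemma genBinom_pascal (z : ℂ) (k : ℕ) :
    genBinom z (k + 1) = genBinom (z - 1) (k + 1) + genBinom (z - 1) k := by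
  have hk1 : ((k : ℂ) + 1) ≠ 0 := Nat.cast_add_one_ne_zero k
  have key : ∏ i ∈ Finset.range (k + 1), (z - i) =
      (∏ i ∈ Finset.range (k + 1), (z - 1 - i)) + ((k : ℂ) + 1) * ∏ i ∈ Finset.range k, (z - 1 - i) := by
    have h1 : ∏ i ∈ Finset.range (k + 1), (z - i) =
        (∏ i ∈ Finset.range k, (z - 1 - i)) * z := by
      rw [Finset.prod_range_succ']
      congr 1
      · exact Finset.prod_congr rfl (fun i _ => by push_cast; ring)
      · simp
    have h2 : ∏ i ∈ Finset.range (k + 1), (z - 1 - i) =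
        (∏ i ∈ Finset.range k, (z - 1 - i)) * (z - 1 - k) := Finset.prod_range_succ _ _
    rw [h1, h2]; ring
  have hfs : ((k+1).factorial : ℂ) = ((k : ℂ)+1) * (k.factorial : ℂ) := by
    rw [Nat.factorial_succ]; push_cast; ring
  unfold genBinom
  rw [key, hfs, add_div]
  congr 1
  rw [← div_div, mul_div_cancel_left₀ _ hk1]

lemma genBinom_natCast (a b : ℕ) : genBinom (a : ℂ) b = (Nat.choose a b : ℂ) := by
  rcases le_or_gt b a with h | h
  · have hprod : ∏ i ∈ Finset.range b, ((a : ℂ) - i) = (a.descFactorial b : ℂ) := by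
      rw [Nat.descFactorial_eq_prod_range, Nat.cast_prod]
      refine Finset.prod_congr rfl (fun i hi => ?_)
      have : i ≤ a := le_trans (Finset.mem_range.mp hi).le h
      push_cast [Nat.cast_sub this]
      ring
    rw [genBinom, hprod, Nat.descFactorial_eq_factorial_mul_choose]
    have hfac : ((b).factorial : ℂ) ≠ 0 := by exact_mod_cast (Nat.factorial_pos _).ne'
    push_cast
    field_simp
  · rw [genBinom, Finset.prod_eq_zero (Finset.mem_range.mpr h) (by simp),
      Nat.choose_eq_zero_of_lt h]
    simp

lemma ascFactorial_prod (d k : ℕ) :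
    ((d + 1).ascFactorial k : ℂ) = ∏ i ∈ Finset.range k, ((d : ℂ) + 1 + i) := by
  induction k with
  | zero => simp
  | succ k ih =>
      rw [Nat.ascFactorial_succ, Finset.prod_range_succ, ← ih]
      push_cast
      ring

lemma genBinom_neg (d k : ℕ) :
    genBinom (-(d : ℂ) - 1) k = (-1 : ℂ) ^ k * (Nat.choose (d + k) k : ℂ) := by
  have hprod : ∏ i ∈ Finset.range k, (-(d : ℂ) - 1 - i) =
      (-1 : ℂ) ^ k * ((d + 1).ascFactorial k : ℂ) := by
    have : ∀ i ∈ Finset.range k, (-(d : ℂ) - 1 - i) = (-1) * ((d : ℂ) + 1 + i) := by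
      intro i _; ring
    rw [Finset.prod_congr rfl this, Finset.prod_mul_distrib, Finset.prod_const,
      Finset.card_range, ascFactorial_prod]
  rw [genBinom, hprod, Nat.ascFactorial_eq_factorial_mul_choose]
  have hfac : ((k).factorial : ℂ) ≠ 0 := by exact_mod_cast (Nat.factorial_pos _).ne'
  push_cast
  field_simp

/-- alternating-sum base case -/
lemma keyI_base (r : ℕ) (z : ℂ) :
    ∑ j ∈ Finset.range (r + 1), (-1 : ℂ) ^ j * genBinom z (r - j) = genBinom (z - 1) r := by
  induction r with
  | zero => simp [genBinom_zero]
  | succ r ih =>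
      rw [Finset.sum_range_succ']
      have : ∑ j ∈ Finset.range (r + 1), (-1 : ℂ) ^ (j + 1) * genBinom z (r + 1 - (j + 1))
          = -∑ j ∈ Finset.range (r + 1), (-1 : ℂ) ^ j * genBinom z (r - j) := by
        rw [← Finset.sum_neg_distrib]
        refine Finset.sum_congr rfl (fun j _ => ?_)
        simp only [pow_succ, Nat.succ_sub_succ]
        ring
      rw [this, ih]
      simp only [Nat.sub_zero, pow_zero, one_mul]
      rw [genBinom_pascal z r]
      ring

/-- Key Vandermonde-type identity. -/
lemma keyI (t : ℕ) : ∀ (r : ℕ) (z : ℂ),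
    ∑ j ∈ Finset.range (r + 1), (-1 : ℂ) ^ j * genBinom z (r - j) * (Nat.choose (t + j) j : ℂ)
      = genBinom (z - (t + 1)) r := by
  induction t with
  | zero =>
      intro r z
      have : ∀ j, ((Nat.choose (0 + j) j : ℕ) : ℂ) = 1 := by
        intro j; rw [Nat.zero_add, Nat.choose_self]; norm_num
      simp only [this, mul_one]
      simpa using keyI_base r z
  | succ t ih =>
      intro r z
      induction r with
      | zero => simp [genBinom_zero]
      | succ r ihr =>
          -- peel j = 0 and use Pascal on the choose
          have lhs_split :
              ∑ j ∈ Finset.range (r + 1 + 1), (-1 : ℂ) ^ j * genBinom z (r + 1 - j) * (Nat.choose (t + 1 + j) j : ℂ)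
              = (∑ j ∈ Finset.range (r + 1 + 1), (-1 : ℂ) ^ j * genBinom z (r + 1 - j) * (Nat.choose (t + j) j : ℂ))
                + ∑ j ∈ Finset.range (r + 1), (-1 : ℂ) ^ (j + 1) * genBinom z (r - j) * (Nat.choose (t + 1 + j) j : ℂ) := by
            rw [Finset.sum_range_succ' (fun j => (-1 : ℂ) ^ j * genBinom z (r + 1 - j) * (Nat.choose (t + 1 + j) j : ℂ)),
                Finset.sum_range_succ' (fun j => (-1 : ℂ) ^ j * genBinom z (r + 1 - j) * (Nat.choose (t + j) j : ℂ))]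
            have pas : ∀ j, (Nat.choose (t + 1 + (j + 1)) (j + 1) : ℂ)
                = (Nat.choose (t + (j + 1)) (j + 1) : ℂ) + (Nat.choose (t + 1 + j) j : ℂ) := by
              intro j
              have h1 : t + 1 + (j + 1) = (t + 1 + j) + 1 := by ring
              rw [h1, Nat.choose_succ_succ' (t + 1 + j) j]
              push_cast
              rw [show t + 1 + j = t + (j + 1) by ring]
              ring
            have : ∀ j ∈ Finset.range (r + 1),
                (-1 : ℂ) ^ (j+1) * genBinom z (r + 1 - (j+1)) * (Nat.choose (t + 1 + (j+1)) (j+1) : ℂ)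
                = (-1 : ℂ) ^ (j+1) * genBinom z (r + 1 - (j+1)) * (Nat.choose (t + (j+1)) (j+1) : ℂ)
                  + (-1 : ℂ) ^ (j+1) * genBinom z (r - j) * (Nat.choose (t + 1 + j) j : ℂ) := by
              intro j _
              rw [pas j, Nat.succ_sub_succ]
              ring
            rw [Finset.sum_congr rfl this, Finset.sum_add_distrib]
            simp only [Nat.add_zero, Nat.choose_zero_right]
            ring
          have neg_sum :
              ∑ j ∈ Finset.range (r + 1), (-1 : ℂ) ^ (j + 1) * genBinom z (r - j) * (Nat.choose (t + 1 + j) j : ℂ)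
              = -∑ j ∈ Finset.range (r + 1), (-1 : ℂ) ^ j * genBinom z (r - j) * (Nat.choose (t + 1 + j) j : ℂ) := by
            rw [← Finset.sum_neg_distrib]
            exact Finset.sum_congr rfl (fun j _ => by rw [pow_succ]; ring)
          rw [lhs_split, neg_sum, ih (r + 1) z, ihr]
          have pasc := genBinom_pascal (z - ((t : ℂ) + 1)) r
          have h2 : z - ((t : ℂ) + 1) - 1 = z - ((t : ℂ) + 1 + 1) := by ring
          rw [h2] at pasc
          rw [pasc]
          have h3 : z - ((t : ℂ) + 1 + 1) = z - (((t + 1 : ℕ) : ℂ) + 1) := by push_cast; ring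
          rw [h3]
          ring

/-- Evaluation of `qg` at a natural first argument, shifted index. -/
lemma qg_key (s n : ℕ) (z : ℂ) :
    qg (s + 1) z (n + 1)
      = genBinom (z - ((n : ℂ) + 1)) s - (-1 : ℂ) ^ s * (Nat.choose (n + s) s : ℂ) := by
  have hIcc : Finset.Icc 1 s = Finset.Ico 1 (s + 1) := (Finset.Ico_add_one_right_eq_Icc 1 s).symm
  have h1 : qg (s + 1) z (n + 1)
      = ∑ j ∈ Finset.range s, (-1 : ℂ) ^ j * genBinom z (s - j) * (Nat.choose (n + j) j : ℂ) := by
    rw [qg, Nat.add_sub_cancel, hIcc, Finset.sum_Ico_eq_sum_range]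
    refine Finset.sum_congr (by norm_num) (fun j _ => ?_)
    congr 2
    · congr 1; omega
    · congr 1; omega
    · congr 1 <;> omega
  have h2 := keyI n s z
  rw [Finset.sum_range_succ] at h2
  have h3 : z - ((n : ℂ) + 1) = z - (((n : ℕ) : ℂ) + 1) := by norm_num
  rw [h1]
  have : ∑ j ∈ Finset.range s, (-1 : ℂ) ^ j * genBinom z (s - j) * (Nat.choose (n + j) j : ℂ)
      = genBinom (z - ((n : ℂ) + 1)) s
        - (-1 : ℂ) ^ s * genBinom z (s - s) * (Nat.choose (n + s) s : ℂ) := by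
    rw [← h2]; ring
  rw [this, Nat.sub_self, genBinom_zero]
  ring

lemma hasProd_cexp {g : ℕ → ℂ} (h : Summable g) :
    HasProd (fun n => Complex.exp (g n)) (Complex.exp (∑' n, g n)) := by
  have hs : HasSum g (∑' n, g n) := h.hasSum
  have ht := (Complex.continuous_exp.tendsto _).comp hs
  refine Filter.Tendsto.congr (fun s => ?_) ht
  exact (Complex.exp_sum s g)

lemma abs_log_one_sub_le {x q : ℝ} (hx0 : 0 ≤ x) (hxq : x ≤ q) (hq1 : q < 1) :
    |Real.log (1 - x)| ≤ x / (1 - q) := by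
  have h1 : 0 < 1 - x := by linarith
  have h1q : 0 < 1 - q := by linarith
  have h2 : Real.log (1 - x) ≤ 0 := Real.log_nonpos (by linarith) (by linarith)
  rw [abs_of_nonpos h2, ← Real.log_inv]
  have h4 : Real.log (1 - x)⁻¹ ≤ (1 - x)⁻¹ - 1 := Real.log_le_sub_one_of_pos (inv_pos.mpr h1)
  have h5 : (1 - x)⁻¹ - 1 = x / (1 - x) := by field_simp; ring
  refine h4.trans ?_
  rw [h5]
  exact div_le_div_of_nonneg_left hx0 h1q (by linarith)

lemma summable_aux (q : ℝ) (hq : 0 < q) (hq1 : q < 1) (K s : ℕ) :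
    Summable (fun n : ℕ => ((K : ℝ) + n) ^ s * q ^ (n + 1)) := by
  have h : Summable (fun n : ℕ => ((n : ℝ) ^ s * q ^ n)) :=
    summable_pow_mul_geometric_of_norm_lt_one s
      (by rwa [Real.norm_eq_abs, abs_of_pos hq])
  have h2 : Summable (fun n : ℕ => (((n + K : ℕ) : ℝ) ^ s * q ^ (n + K))) :=
    (summable_nat_add_iff K).mpr h
  have h3 := h2.mul_right (q / q ^ K)
  refine h3.congr (fun n => ?_)
  have hqK : q ^ K ≠ 0 := pow_ne_zero _ hq.ne'
  push_cast
  rw [pow_add]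
  field_simp
  ring

/-- Bound on the generalized binomial at a shifted natural argument. -/
lemma norm_genBinom_le (N n s : ℕ) :
    ‖genBinom ((N : ℂ) - ((n : ℂ) + 1)) s‖ ≤ ((N : ℝ) + s + 1 + n) ^ s := by
  have hfac : (1 : ℝ) ≤ (s.factorial : ℝ) := Nat.one_le_cast.mpr s.factorial_pos
  rw [genBinom, norm_div, norm_prod]
  have hb : ∀ i ∈ Finset.range s, ‖(N : ℂ) - ((n : ℂ) + 1) - (i : ℂ)‖ ≤ (N : ℝ) + s + 1 + n := by
    intro i hi
    have hi' : (i : ℝ) ≤ s := by exact_mod_cast (Finset.mem_range.mp hi).le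
    have : (N : ℂ) - ((n : ℂ) + 1) - (i : ℂ) = (((N : ℝ) - (n + 1) - i : ℝ) : ℂ) := by push_cast; ring
    rw [this, Complex.norm_real, Real.norm_eq_abs, abs_le]
    have c1 : (0:ℝ) ≤ (N:ℝ) := Nat.cast_nonneg N
    have c2 : (0:ℝ) ≤ (n:ℝ) := Nat.cast_nonneg n
    have c3 : (0:ℝ) ≤ (i:ℝ) := Nat.cast_nonneg i
    have c4 : (0:ℝ) ≤ (s:ℝ) := Nat.cast_nonneg s
    constructor
    · nlinarith
    · nlinarith
  calc (∏ i ∈ Finset.range s, ‖(N : ℂ) - ((n : ℂ) + 1) - (i : ℂ)‖) / ‖((s.factorial : ℕ) : ℂ)‖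
      ≤ (∏ i ∈ Finset.range s, ((N : ℝ) + s + 1 + n)) / 1 := by
        apply div_le_div₀ (by positivity)
          (Finset.prod_le_prod (fun i _ => norm_nonneg _) hb) one_pos
        rw [Complex.norm_natCast]
        exact hfac
    _ = ((N : ℝ) + s + 1 + n) ^ s := by
        rw [Finset.prod_const, Finset.card_range, div_one]


/-- The q-analogue of the multiple gamma function: `qMG q r z = G_r(z; q)`.
For `r = 0` it is the q-number `[z] = (1-q^z)/(1-q)`; for `r ≥ 1`,
`G_r(z+1;q) = (1-q)^{-C(z,r)} ∏_{n≥1} ((1-q^{z+n})/(1-q^n))^{(-1)^r C(n+r-2,r-1)} (1-q^n)^{g_r(z,n)}`. -/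
noncomputable def qMG (q : ℝ) (r : ℕ) (z : ℂ) : ℂ :=
  if r = 0 then (1 - (q : ℂ) ^ z) / (1 - (q : ℂ)) else
    (1 - (q : ℂ)) ^ (-genBinom (z - 1) r) *
      ∏' n : ℕ,
        (((1 - (q : ℂ) ^ ((z - 1) + (n + 1))) / (1 - (q : ℂ) ^ (n + 1)))
            ^ ((-1 : ℂ) ^ r * (Nat.choose (n + 1 + r - 2) (r - 1))) *
          (1 - (q : ℂ) ^ (n + 1)) ^ (qg r (z - 1) (n + 1)))

theorem stmt4 (q : ℝ) (hq : 0 < q) (hq1 : q < 1) (r : ℕ) (hr : 1 ≤ r) (N : ℕ) (hN : 1 ≤ N) :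
    qMG q r (N + 1)
      = (1 - (q : ℂ)) ^ (-(Nat.choose N r : ℤ)) *
          ∏ n ∈ Finset.Icc 1 N, (1 - (q : ℂ) ^ n) ^ (Nat.choose (N - n) (r - 1)) := by
  obtain ⟨s, rfl⟩ : ∃ s, r = s + 1 := ⟨r - 1, by omega⟩
  have hq0 : (0:ℝ) < 1 - q := by linarith
  have hub : ∀ m : ℕ, q ^ (m + 1) ≤ q := by
    intro m
    calc q ^ (m + 1) ≤ q ^ 1 := pow_le_pow_of_le_one hq.le hq1.le (by omega)
      _ = q := pow_one q
  have hpos : ∀ m : ℕ, 0 < 1 - q ^ (m + 1) := fun m => by linarith [hub m]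
  set ℓ : ℕ → ℝ := fun m => Real.log (1 - q ^ m) with hℓ
  set E : ℕ → ℂ := fun n => (-1 : ℂ) ^ (s + 1) * ((n + s).choose s : ℂ) with hE
  set c : ℕ → ℂ := fun n => genBinom ((N : ℂ) - ((n : ℂ) + 1)) s with hc
  set h1 : ℕ → ℂ := fun n => E n * ((ℓ (N + n + 1) : ℝ) : ℂ) with hh1
  set h2 : ℕ → ℂ := fun n => c n * ((ℓ (n + 1) : ℝ) : ℂ) with hh2
  have key : ∀ (x : ℝ), 0 < x → ∀ (w : ℂ), ((x : ℝ) : ℂ) ^ w = Complex.exp (w * (Real.log x : ℂ)) := by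
    intro x hx w
    rw [Complex.cpow_def_of_ne_zero (Complex.ofReal_ne_zero.mpr hx.ne') w,
      Complex.ofReal_log hx.le, mul_comm]
  have hElb : ∀ n : ℕ, ‖E n‖ ≤ ((N:ℝ) + s + 1 + n) ^ s := by
    intro n
    rw [hE]
    simp only [norm_mul, norm_pow, norm_neg, norm_one, one_pow, one_mul, Complex.norm_natCast]
    calc ((n + s).choose s : ℝ) ≤ (((n + s) ^ s : ℕ) : ℝ) := by
          exact_mod_cast Nat.choose_le_pow (n + s) s
      _ ≤ ((N:ℝ) + s + 1 + n) ^ s := by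
          push_cast
          refine pow_le_pow_left₀ (by positivity) ?_ s
          have : (0:ℝ) ≤ (N:ℝ) := Nat.cast_nonneg N
          linarith
  have hclb : ∀ n : ℕ, ‖c n‖ ≤ ((N:ℝ) + s + 1 + n) ^ s := fun n => norm_genBinom_le N n s
  have hllb1 : ∀ n : ℕ, |ℓ (n + 1)| ≤ q ^ (n + 1) / (1 - q) := fun n =>
    abs_log_one_sub_le (pow_nonneg hq.le _) (hub n) hq1
  have hllb2 : ∀ n : ℕ, |ℓ (N + n + 1)| ≤ q ^ (n + 1) / (1 - q) := by
    intro n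
    have h' := abs_log_one_sub_le (pow_nonneg hq.le (N + n + 1)) (hub (N + n)) hq1
    have h'' : q ^ (N + n + 1) / (1 - q) ≤ q ^ (n + 1) / (1 - q) := by
      have hle : q ^ (N + n + 1) ≤ q ^ (n + 1) := pow_le_pow_of_le_one hq.le hq1.le (by omega)
      exact (div_le_div_iff_of_pos_right hq0).mpr hle
    exact le_trans (by simpa using h') h''
  have hM : Summable (fun n : ℕ => (((N + s + 1 : ℕ):ℝ) + n) ^ s * q ^ (n + 1) * (1 / (1 - q))) :=
    (summable_aux q hq hq1 (N + s + 1) s).mul_right _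
  have hbound : ∀ (F G : ℕ → ℂ), (∀ n, ‖F n‖ ≤ ((N:ℝ) + s + 1 + n) ^ s) →
      (∀ n, ‖G n‖ ≤ q ^ (n + 1) / (1 - q)) →
      Summable (fun n => F n * G n) := by
    intro F G hF hG
    refine Summable.of_norm_bounded hM (fun n => ?_)
    rw [norm_mul]
    have e : (((N + s + 1 : ℕ):ℝ) + n) ^ s * q ^ (n + 1) * (1 / (1 - q))
        = ((N:ℝ) + s + 1 + n) ^ s * (q ^ (n + 1) / (1 - q)) := by
      push_cast; ring
    rw [e]
    exact mul_le_mul (hF n) (hG n) (norm_nonneg _) (by positivity)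
  have hsum1 : Summable h1 := by
    refine hbound E _ hElb (fun n => ?_)
    rw [Complex.norm_real, Real.norm_eq_abs]
    exact hllb2 n
  have hsum2 : Summable h2 := by
    refine hbound c _ hclb (fun n => ?_)
    rw [Complex.norm_real, Real.norm_eq_abs]
    exact hllb1 n
  have hg : Summable (fun n => h1 n + h2 n) := hsum1.add hsum2
  have hfactor : ∀ n : ℕ,
      (((1 - (q : ℂ) ^ ((((N:ℂ) + 1) - 1) + ((n:ℂ) + 1))) / (1 - (q : ℂ) ^ (n + 1)))
            ^ ((-1 : ℂ) ^ (s + 1) * (Nat.choose (n + 1 + (s + 1) - 2) s : ℂ)) *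
          (1 - (q : ℂ) ^ (n + 1)) ^ (qg (s + 1) (((N:ℂ) + 1) - 1) (n + 1)))
        = Complex.exp (h1 n + h2 n) := by
    intro n
    have hz : ((N:ℂ) + 1) - 1 = (N:ℂ) := by ring
    rw [hz]
    have ha : 0 < 1 - q ^ (N + n + 1) := hpos (N + n)
    have hb : 0 < 1 - q ^ (n + 1) := hpos n
    have e1 : (1 : ℂ) - (q:ℂ) ^ ((N:ℂ) + ((n:ℂ) + 1)) = (((1 - q ^ (N + n + 1) : ℝ)) : ℂ) := by
      rw [show (N:ℂ) + ((n:ℂ) + 1) = ((N + n + 1 : ℕ) : ℂ) by push_cast; ring,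
        Complex.cpow_natCast]
      push_cast
      ring
    have e2 : (1 : ℂ) - (q:ℂ) ^ (n + 1) = (((1 - q ^ (n + 1) : ℝ)) : ℂ) := by
      push_cast; ring
    have hEexp : ((-1 : ℂ) ^ (s + 1) * (Nat.choose (n + 1 + (s + 1) - 2) s : ℂ)) = E n := by
      have i1 : n + 1 + (s + 1) - 2 = n + s := by omega
      rw [hE, i1]
    have hqg : qg (s + 1) ((N:ℂ)) (n + 1) = c n + E n := by
      rw [qg_key s n ((N:ℂ)), hc, hE, pow_succ]
      ring
    rw [e1, e2, hEexp, hqg, ← Complex.ofReal_div, key _ (by positivity) _, key _ hb _,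
      ← Complex.exp_add]
    congr 1
    rw [Real.log_div ha.ne' hb.ne']
    rw [hh1, hh2, hℓ]
    push_cast
    ring
  have hprod : HasProd
      (fun n : ℕ =>
        (((1 - (q : ℂ) ^ ((((N:ℂ) + 1) - 1) + ((n:ℂ) + 1))) / (1 - (q : ℂ) ^ (n + 1)))
            ^ ((-1 : ℂ) ^ (s + 1) * (Nat.choose (n + 1 + (s + 1) - 2) s : ℂ)) *
          (1 - (q : ℂ) ^ (n + 1)) ^ (qg (s + 1) (((N:ℂ) + 1) - 1) (n + 1))))
      (Complex.exp (∑' n, (h1 n + h2 n))) := by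
    have h := hasProd_cexp hg
    rwa [show (fun n => Complex.exp (h1 n + h2 n))
        = (fun n : ℕ =>
        (((1 - (q : ℂ) ^ ((((N:ℂ) + 1) - 1) + ((n:ℂ) + 1))) / (1 - (q : ℂ) ^ (n + 1)))
            ^ ((-1 : ℂ) ^ (s + 1) * (Nat.choose (n + 1 + (s + 1) - 2) s : ℂ)) *
          (1 - (q : ℂ) ^ (n + 1)) ^ (qg (s + 1) (((N:ℂ) + 1) - 1) (n + 1))))
      from funext fun n => (hfactor n).symm] at h
  have hsum2' : Summable (fun n => h2 (n + N)) := (summable_nat_add_iff N).mpr hsum2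
  have hzero : ∀ n : ℕ, h1 n + h2 (n + N) = 0 := by
    intro n
    have hcc : c (n + N) = -E n := by
      simp only [hc, hE]
      rw [show (N:ℂ) - (((n + N : ℕ) : ℂ) + 1) = -(n:ℂ) - 1 by push_cast; ring,
        genBinom_neg n s, pow_succ]
      ring
    simp only [hh1, hh2]
    rw [hcc, show (n + N) + 1 = N + n + 1 by omega]
    ring
  have htsum : ∑' n, (h1 n + h2 n) = ∑ n ∈ Finset.range N, h2 n := by
    rw [Summable.tsum_add hsum1 hsum2, ← Summable.sum_add_tsum_nat_add N hsum2]
    have h0 : ∑' n, h1 n + ∑' n, h2 (n + N) = 0 := by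
      calc ∑' n, h1 n + ∑' n, h2 (n + N) = ∑' n, (h1 n + h2 (n + N)) :=
            (Summable.tsum_add hsum1 hsum2').symm
        _ = ∑' (_ : ℕ), (0 : ℂ) := tsum_congr hzero
        _ = 0 := tsum_zero
    linear_combination h0
  have hfin : Complex.exp (∑ n ∈ Finset.range N, h2 n)
      = ∏ n ∈ Finset.Icc 1 N, (1 - (q : ℂ) ^ n) ^ (Nat.choose (N - n) s) := by
    rw [Complex.exp_sum, ← Finset.Ico_add_one_right_eq_Icc, Finset.prod_Ico_eq_prod_range]
    simp only [Nat.add_sub_cancel]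
    refine Finset.prod_congr rfl (fun n hn => ?_)
    have hnN : n + 1 ≤ N := by have := Finset.mem_range.mp hn; omega
    have hcval : c n = (((N - (n + 1)).choose s : ℕ) : ℂ) := by
      simp only [hc]
      rw [show (N:ℂ) - ((n:ℂ) + 1) = (((N - (n+1) : ℕ)) : ℂ) by
        push_cast [Nat.cast_sub hnN]; ring, genBinom_natCast]
    have hb := hpos n
    simp only [hh2, hℓ]
    rw [hcval]
    rw [show Complex.exp ((((N - (n + 1)).choose s : ℕ) : ℂ) * ((Real.log (1 - q ^ (n+1)) : ℝ) : ℂ))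
        = (((1 - q ^ (n + 1) : ℝ)) : ℂ) ^ ((((N - (n + 1)).choose s : ℕ) : ℂ))
      from (key _ hb _).symm]
    rw [Complex.cpow_natCast]
    rw [show (1 : ℂ) - (q:ℂ) ^ (1 + n) = (((1 - q ^ (n + 1) : ℝ)) : ℂ) by push_cast; ring_nf]
    congr 2
    omega
  -- assemble
  simp only [qMG, Nat.succ_ne_zero, if_false, Nat.add_sub_cancel]
  rw [hprod.tprod_eq, htsum, hfin]
  congr 1
  rw [show ((N:ℂ) + 1) - 1 = (N:ℂ) by ring, genBinom_natCast,
    show -((N.choose (s+1) : ℕ) : ℂ) = (((-(N.choose (s+1) : ℤ)) : ℤ) : ℂ) by push_cast; ring,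
    Complex.cpow_intCast]
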